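/- If a string T has a cover C and a border B such that |C| ≤ |B|, then C is also a cover of B. -/

import Mathlib

/-!
STATEMENT 1: If a string `T` has a cover `C` and a border `B` such that
`|C| ≤ |B|`, then `C` is also a cover of `B`.
Strings are modelled as lists; positions are 0-based.
-/

variable {α : Type*}

/-- `i` is a (0-based) starting position of an occurrence of `C` in `T`. -/
def IsOcc (T C : List α) (i : ℕ) : Prop :=
  i + C.length ≤ T.length ∧ (T.drop i).take C.length = C

/-- Position `p` (0-based) of `T` lies within an occurrence of `C` in `T`. -/
def CoveredPos (T C : List α) (p : ℕ) : Prop :=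
  ∃ i, IsOcc T C i ∧ i ≤ p ∧ p < i + C.length

/-- `C` is a cover of `T`: `C` fits into `T` and every position of `T`
lies within an occurrence of `C`. -/
def IsCover (C T : List α) : Prop :=
  C.length ≤ T.length ∧ ∀ p, p < T.length → CoveredPos T C p

/-- `B` is a border of `T`: `B` is both a prefix and a suffix of `T`. -/
def IsBorder (B T : List α) : Prop :=
  B <+: T ∧ B <:+ T

theorem cover_of_border (T C B : List α) (hC : IsCover C T) (hB : IsBorder B T)
    (hlen : C.length ≤ B.length) : IsCover C B := by
  obtain ⟨hCT, hcov⟩ := hC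
  obtain ⟨hpre, hsuf⟩ := hB
  have hBT := hpre.length_le
  refine ⟨hlen, fun p hp => ?_⟩
  obtain ⟨i, ⟨hi1, hi2⟩, hip, hpi⟩ := hcov p (lt_of_lt_of_le hp hBT)
  by_cases h : i + C.length ≤ B.length
  · refine ⟨i, ⟨h, ?_⟩, hip, hpi⟩
    obtain ⟨s, hs⟩ := hpre
    rw [← hs, List.drop_append_of_le_length (by omega),
      List.take_append_of_le_length (by simp; omega)] at hi2
    exact hi2
  · -- C is a suffix of T
    obtain ⟨j, ⟨hj1, hj2⟩, hjp, hpj⟩ := hcov (T.length - 1) (by omega)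
    have hjlen : j + C.length = T.length := by omega
    have hCsufT : C <:+ T := by
      refine ⟨T.take j, ?_⟩
      have : T.drop j = C := by
        rw [← hj2]
        exact (List.take_of_length_le (by simp; omega)).symm
      rw [← this, List.take_append_drop]
    have hCsufB : C <:+ B := by
      obtain ⟨u, hu⟩ := hsuf
      obtain ⟨v, hv⟩ := hCsufT
      refine ⟨v.drop u.length, ?_⟩
      have hvlen : v.length = T.length - C.length := by
        have := congrArg List.length hv
        simp at this; omega
      have hul : u.length ≤ v.length := by
        have := congrArg List.length hu
        simp at this; omega
      have : u ++ B = (v.take u.length ++ v.drop u.length) ++ C := by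
        rw [List.take_append_drop, hv, hu]
      rw [List.append_assoc] at this
      have hux : u = v.take u.length := by
        apply List.append_inj_left this
        simp [hul]
      have := this
      rw [← hux] at this
      exact (List.append_cancel_left this).symm
    refine ⟨B.length - C.length, ⟨by omega, ?_⟩, by omega, by omega⟩
    obtain ⟨s, hs⟩ := hCsufB
    have hsl : s.length = B.length - C.length := by
      have := congrArg List.length hs
      simp at this; omega
    rw [← hsl, ← hs]
    have : (s ++ C).drop s.length = C := List.drop_left
    rw [this, List.take_length]
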